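/- With 𝔤 = 𝔥 ⊕ 𝔥 and B as above (α+β > β ≥ α > 0), define 𝔤^{ss} = span{Y₂, Z₂}, 𝔤^{c} = span{X₁, X₂}, 𝔤^{uu} = span{Z₁, Y₁}. Then 𝔤^{cs} = 𝔤^{ss} ⊕ 𝔤^{c}, 𝔤^{cu} = 𝔤^{c} ⊕ 𝔤^{uu}, and 𝔤^{c} are all Lie subalgebras of 𝔤, and each is B-invariant. -/

import Mathlib

namespace Stmt11

/-- `𝔤 = 𝔥 ⊕ 𝔥` realized inside the product ring of `3 × 3` real matrices with the
commutator bracket; only nontrivial basis brackets are `[X₁,Y₁] = Z₁`, `[X₂,Y₂] = Z₂`. -/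
abbrev amb := Matrix (Fin 3) (Fin 3) ℝ × Matrix (Fin 3) (Fin 3) ℝ

noncomputable def X1 : amb := (Matrix.single 0 1 1, 0)
noncomputable def Y1 : amb := (Matrix.single 1 2 1, 0)
noncomputable def Z1 : amb := (Matrix.single 0 2 1, 0)
noncomputable def X2 : amb := (0, Matrix.single 0 1 1)
noncomputable def Y2 : amb := (0, Matrix.single 1 2 1)
noncomputable def Z2 : amb := (0, Matrix.single 0 2 1)

noncomputable def gss : Submodule ℝ amb := Submodule.span ℝ ({Y2, Z2} : Set amb)
noncomputable def gc : Submodule ℝ amb := Submodule.span ℝ ({X1, X2} : Set amb)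
noncomputable def guu : Submodule ℝ amb := Submodule.span ℝ ({Z1, Y1} : Set amb)
noncomputable def gcs : Submodule ℝ amb := gss ⊔ gc
noncomputable def gcu : Submodule ℝ amb := gc ⊔ guu

/-- The Lie bracket on the product is computed componentwise. -/
lemma prodlie (a b c d : Matrix (Fin 3) (Fin 3) ℝ) :
    ⁅((a, b) : amb), ((c, d) : amb)⁆ = (⁅a, c⁆, ⁅b, d⁆) := by
  simp [Ring.lie_def, Prod.ext_iff]

lemma mem_of_eq {S : Submodule ℝ amb} {v w : amb} (h : v = w) (hw : w ∈ S) : v ∈ S :=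
  h ▸ hw

lemma lieX1Y1 : ⁅X1, Y1⁆ = Z1 := by
  simp [X1, Y1, Z1, prodlie, Ring.lie_def, Prod.ext_iff,
    Matrix.single_mul_single_same, Matrix.single_mul_single_of_ne]

lemma lieY1X1 : ⁅Y1, X1⁆ = -Z1 := by
  rw [← lieX1Y1]; simp only [Ring.lie_def, neg_sub]

lemma lieX2Y2 : ⁅X2, Y2⁆ = Z2 := by
  simp [X2, Y2, Z2, prodlie, Ring.lie_def, Prod.ext_iff,
    Matrix.single_mul_single_same, Matrix.single_mul_single_of_ne]

lemma lieY2X2 : ⁅Y2, X2⁆ = -Z2 := by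
  rw [← lieX2Y2]; simp only [Ring.lie_def, neg_sub]

/-- Closure of a span under the bracket follows from closure on generators. -/
lemma span_lie_closed {S : Set amb}
    (h : ∀ a ∈ S, ∀ b ∈ S, ⁅a, b⁆ ∈ Submodule.span ℝ S) :
    ∀ v ∈ Submodule.span ℝ S, ∀ w ∈ Submodule.span ℝ S, ⁅v, w⁆ ∈ Submodule.span ℝ S := by
  intro v hv w hw
  induction hv using Submodule.span_induction with
  | mem a ha =>
    induction hw using Submodule.span_induction with
    | mem b hb => exact h a ha b hb
    | zero => simp [Ring.lie_def]
    | add x y _ _ hx hy => rw [show ⁅a, x + y⁆ = ⁅a, x⁆ + ⁅a, y⁆ by simp only [Ring.lie_def]; noncomm_ring]; exact (Submodule.span ℝ S).add_mem hx hy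
    | smul c x _ hx => rw [show ⁅a, c • x⁆ = c • ⁅a, x⁆ by simp only [Ring.lie_def, mul_smul_comm, smul_mul_assoc, smul_sub]]; exact (Submodule.span ℝ S).smul_mem c hx
  | zero => simp [Ring.lie_def]
  | add x y _ _ hx hy => rw [show ⁅x + y, w⁆ = ⁅x, w⁆ + ⁅y, w⁆ by simp only [Ring.lie_def]; noncomm_ring]; exact (Submodule.span ℝ S).add_mem hx hy
  | smul c x _ hx => rw [show ⁅c • x, w⁆ = c • ⁅x, w⁆ by simp only [Ring.lie_def, mul_smul_comm, smul_mul_assoc, smul_sub]]; exact (Submodule.span ℝ S).smul_mem c hx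

/-- Invariance of a span under a linear map follows from invariance on generators. -/
lemma span_B_closed {S : Set amb} (B : amb →ₗ[ℝ] amb)
    (h : ∀ a ∈ S, B a ∈ Submodule.span ℝ S) :
    ∀ v ∈ Submodule.span ℝ S, B v ∈ Submodule.span ℝ S := by
  intro v hv
  induction hv using Submodule.span_induction with
  | mem a ha => exact h a ha
  | zero => simp
  | add x y _ _ hx hy => rw [map_add]; exact (Submodule.span ℝ S).add_mem hx hy
  | smul c x _ hx => rw [map_smul]; exact (Submodule.span ℝ S).smul_mem c hx

lemma gcs_eq : gcs = Submodule.span ℝ ({Y2, Z2, X1, X2} : Set amb) := by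
  rw [gcs, gss, gc, ← Submodule.span_union]
  congr 1
  ext x
  simp only [Set.mem_union, Set.mem_insert_iff, Set.mem_singleton_iff]
  tauto

lemma gcu_eq : gcu = Submodule.span ℝ ({X1, X2, Z1, Y1} : Set amb) := by
  rw [gcu, gc, guu, ← Submodule.span_union]
  congr 1
  ext x
  simp only [Set.mem_union, Set.mem_insert_iff, Set.mem_singleton_iff]
  tauto

/-- With `𝔤^{ss} = span{Y₂,Z₂}`, `𝔤^c = span{X₁,X₂}`,
`𝔤^{uu} = span{Z₁,Y₁}`, the subspaces `𝔤^{cs} = 𝔤^{ss} ⊕ 𝔤^c`, `𝔤^{cu} = 𝔤^c ⊕ 𝔤^{uu}`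
and `𝔤^c` are Lie subalgebras of `𝔤`, each invariant under the diagonal hyperbolic
automorphism `B`. -/
theorem stmt_11 (lam α β : ℝ) (hlam : 1 < lam) (hα : 0 < α) (hαβ : α ≤ β)
    (B : amb →ₗ[ℝ] amb)
    (hBZ1 : B Z1 = lam ^ (α + β) • Z1)
    (hBY1 : B Y1 = lam ^ β • Y1)
    (hBX1 : B X1 = lam ^ α • X1)
    (hBX2 : B X2 = lam ^ (-α) • X2)
    (hBY2 : B Y2 = lam ^ (-β) • Y2)
    (hBZ2 : B Z2 = lam ^ (-α - β) • Z2) :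
    (∀ v ∈ gcs, ∀ w ∈ gcs, ⁅v, w⁆ ∈ gcs) ∧ (∀ v ∈ gcs, B v ∈ gcs) ∧
    (∀ v ∈ gcu, ∀ w ∈ gcu, ⁅v, w⁆ ∈ gcu) ∧ (∀ v ∈ gcu, B v ∈ gcu) ∧
    (∀ v ∈ gc, ∀ w ∈ gc, ⁅v, w⁆ ∈ gc) ∧ (∀ v ∈ gc, B v ∈ gc) := by
  refine ⟨?_, ?_, ?_, ?_, ?_, ?_⟩
  · -- gcs bracket closure
    rw [gcs_eq]
    apply span_lie_closed
    intro a ha b hb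
    simp only [Set.mem_insert_iff, Set.mem_singleton_iff] at ha hb
    rcases ha with rfl | rfl | rfl | rfl <;> rcases hb with rfl | rfl | rfl | rfl <;>
      first
      | exact mem_of_eq lieX2Y2 (Submodule.subset_span (by simp))
      | exact mem_of_eq lieY2X2
          ((Submodule.span ℝ _).neg_mem (Submodule.subset_span (by simp)))
      | exact mem_of_eq (by simp [X1, X2, Y1, Y2, Z1, Z2, prodlie, Ring.lie_def,
          Prod.ext_iff, Matrix.single_mul_single_same, Matrix.single_mul_single_of_ne])
          ((Submodule.span ℝ _).zero_mem)
  · -- gcs B-invariance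
    rw [gcs_eq]
    apply span_B_closed
    intro a ha
    simp only [Set.mem_insert_iff, Set.mem_singleton_iff] at ha
    rcases ha with rfl | rfl | rfl | rfl <;>
      [rw [hBY2]; rw [hBZ2]; rw [hBX1]; rw [hBX2]] <;>
      exact (Submodule.span ℝ _).smul_mem _ (Submodule.subset_span (by simp))
  · -- gcu bracket closure
    rw [gcu_eq]
    apply span_lie_closed
    intro a ha b hb
    simp only [Set.mem_insert_iff, Set.mem_singleton_iff] at ha hb
    rcases ha with rfl | rfl | rfl | rfl <;> rcases hb with rfl | rfl | rfl | rfl <;>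
      first
      | exact mem_of_eq lieX1Y1 (Submodule.subset_span (by simp))
      | exact mem_of_eq lieY1X1
          ((Submodule.span ℝ _).neg_mem (Submodule.subset_span (by simp)))
      | exact mem_of_eq (by simp [X1, X2, Y1, Y2, Z1, Z2, prodlie, Ring.lie_def,
          Prod.ext_iff, Matrix.single_mul_single_same, Matrix.single_mul_single_of_ne])
          ((Submodule.span ℝ _).zero_mem)
  · -- gcu B-invariance
    rw [gcu_eq]
    apply span_B_closed
    intro a ha
    simp only [Set.mem_insert_iff, Set.mem_singleton_iff] at ha
    rcases ha with rfl | rfl | rfl | rfl <;>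
      [rw [hBX1]; rw [hBX2]; rw [hBZ1]; rw [hBY1]] <;>
      exact (Submodule.span ℝ _).smul_mem _ (Submodule.subset_span (by simp))
  · -- gc bracket closure
    rw [gc]
    apply span_lie_closed
    intro a ha b hb
    simp only [Set.mem_insert_iff, Set.mem_singleton_iff] at ha hb
    rcases ha with rfl | rfl <;> rcases hb with rfl | rfl <;>
      exact mem_of_eq (by simp [X1, X2, prodlie, Ring.lie_def, Prod.ext_iff,
        Matrix.single_mul_single_same, Matrix.single_mul_single_of_ne])
        ((Submodule.span ℝ _).zero_mem)
  · -- gc B-invariance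
    rw [gc]
    apply span_B_closed
    intro a ha
    simp only [Set.mem_insert_iff, Set.mem_singleton_iff] at ha
    rcases ha with rfl | rfl <;> [rw [hBX1]; rw [hBX2]] <;>
      exact (Submodule.span ℝ _).smul_mem _ (Submodule.subset_span (by simp))

end Stmt11
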